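/- Let S be a metric space, (μ_n) Borel probability measures on S converging weakly to μ, (f_n) measurable extended-real-valued functions on S, and g : S → ℝ a bounded above upper semicontinuous function with f_n ≥ g pointwise for all n and −∞ < ∫_S g dμ = lim_{n→∞} ∫_S g dμ_n. Then ∫_S liminf_{n→∞, s'→s} f_n(s') dμ(s) ≤ liminf_{n→∞} ∫_S f_n dμ_n. -/

import Mathlib

open MeasureTheory Filter Topology ENNReal

/-- The positive part of an extended real number, as an element of `ℝ≥0∞`. -/
noncomputable def eposPart (x : EReal) : ℝ≥0∞ :=
  if x = ⊤ then ⊤ else ENNReal.ofReal x.toReal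

/-- The integral of an extended-real-valued function: `∫ f⁺ dμ − ∫ f⁻ dμ`. -/
noncomputable def eintegral {S : Type*} [MeasurableSpace S]
    (μ : MeasureTheory.Measure S) (f : S → EReal) : EReal :=
  ((∫⁻ s, eposPart (f s) ∂μ : ℝ≥0∞) : EReal) -
    ((∫⁻ s, eposPart (-f s) ∂μ : ℝ≥0∞) : EReal)

/-- The integral of an extended-real-valued function `f` is defined when
`min(∫ f⁺ dμ, ∫ f⁻ dμ) < ∞`. -/
def EIntegralDefined {S : Type*} [MeasurableSpace S]
    (μ : MeasureTheory.Measure S) (f : S → EReal) : Prop :=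
  (∫⁻ s, eposPart (f s) ∂μ) ≠ ⊤ ∨ (∫⁻ s, eposPart (-f s) ∂μ) ≠ ⊤

/-! ### Auxiliary lemmas -/

section EPosPart

lemma eposPart_coe (r : ℝ) : eposPart (r : EReal) = ENNReal.ofReal r := by
  simp [eposPart, EReal.coe_ne_top]

lemma eposPart_coe_ennreal (x : ℝ≥0∞) : eposPart (x : EReal) = x := by
  rcases eq_or_ne x ⊤ with rfl | hx
  · simp [eposPart]
  · rw [eposPart, if_neg (by simpa using hx), EReal.toReal_coe_ennreal,
      ENNReal.ofReal_toReal hx]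

lemma eposPart_mono : Monotone eposPart := by
  intro x y hxy
  rcases eq_or_ne y ⊤ with rfl | hy
  · simp [eposPart]
  rcases eq_or_ne x ⊤ with rfl | hx
  · exact absurd (top_le_iff.1 hxy) hy
  rw [eposPart, if_neg hx, eposPart, if_neg hy]
  rcases eq_or_ne x ⊥ with rfl | hx'
  · simp
  · exact ENNReal.ofReal_le_ofReal (EReal.toReal_le_toReal hxy hx' hy)

lemma measurable_eposPart : Measurable eposPart := by
  unfold eposPart
  exact Measurable.ite (by simp)
    measurable_const (ENNReal.measurable_ofReal.comp measurable_ereal_toReal)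

lemma coe_ennreal_eq_coe_toReal {x : ℝ≥0∞} (hx : x ≠ ⊤) :
    (x : EReal) = ((x.toReal : ℝ) : EReal) := by
  rw [← EReal.coe_toReal (by simpa using hx) (EReal.coe_ennreal_ne_bot x),
    EReal.toReal_coe_ennreal]

lemma real_ofReal_identity (a r : ℝ) (h : r ≤ a) :
    ENNReal.ofReal a + ENNReal.ofReal (-r)
      = ENNReal.ofReal (a - r) + ENNReal.ofReal r + ENNReal.ofReal (-a) := by
  apply (ENNReal.toReal_eq_toReal_iff' (by finiteness) (by finiteness)).1
  rw [ENNReal.toReal_add (by finiteness) (by finiteness),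
    ENNReal.toReal_add (by finiteness) (by finiteness),
    ENNReal.toReal_add (by finiteness) (by finiteness)]
  simp only [ENNReal.toReal_ofReal']
  simp only [max_def]
  split_ifs <;> linarith

lemma eposPart_identity (x : EReal) (r : ℝ) (h : (r : EReal) ≤ x) :
    eposPart x + ENNReal.ofReal (-r)
      = eposPart (x - (r : EReal)) + ENNReal.ofReal r + eposPart (-x) := by
  induction x with
  | bot => exact absurd h (by simp)
  | coe a =>
      rw [← EReal.coe_sub, ← EReal.coe_neg, eposPart_coe, eposPart_coe, eposPart_coe]
      exact real_ofReal_identity a r (by exact_mod_cast h)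
  | top =>
      rw [EReal.top_sub_coe]
      simp [eposPart]

lemma eposPart_sub_coe_eq (x : EReal) (r : ℝ) (h : (r : EReal) ≤ x) :
    eposPart (x - (r : EReal)) = if x = ⊤ then ⊤ else ENNReal.ofReal (x.toReal - r) := by
  induction x with
  | bot => exact absurd h (by simp)
  | coe a =>
      rw [← EReal.coe_sub, eposPart_coe, if_neg (EReal.coe_ne_top a), EReal.toReal_coe]
  | top => rw [EReal.top_sub_coe]; simp [eposPart]

lemma recon_eq (x : EReal) (r : ℝ) (h : (r : EReal) ≤ x) :
    x = (r : EReal) + ((eposPart (x - (r : EReal)) : ℝ≥0∞) : EReal) := by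
  induction x with
  | bot => exact absurd h (by simp)
  | coe a =>
      have hra : r ≤ a := by exact_mod_cast h
      rw [← EReal.coe_sub, eposPart_coe, EReal.coe_ennreal_ofReal,
        max_eq_left (by linarith), ← EReal.coe_add]
      norm_num
  | top =>
      rw [EReal.top_sub_coe]
      have : eposPart ⊤ = ⊤ := by simp [eposPart]
      rw [this, EReal.coe_ennreal_top, EReal.coe_add_top]

end EPosPart

section EIntegral

variable {S : Type*} [MeasurableSpace S]

lemma eintegral_coe_real (ν : Measure S) (g : S → ℝ) :
    eintegral ν (fun s => ((g s : ℝ) : EReal))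
      = ((∫⁻ s, ENNReal.ofReal (g s) ∂ν : ℝ≥0∞) : EReal)
        - ((∫⁻ s, ENNReal.ofReal (-g s) ∂ν : ℝ≥0∞) : EReal) := by
  have h1 : ∀ s : S, eposPart ((g s : EReal)) = ENNReal.ofReal (g s) := fun s => eposPart_coe _
  have h2 : ∀ s : S, eposPart (-((g s : ℝ) : EReal)) = ENNReal.ofReal (-g s) := fun s => by
    rw [← EReal.coe_neg, eposPart_coe]
  simp only [eintegral, h1, h2]

lemma eintegral_mono (ν : Measure S) (f₁ f₂ : S → EReal) (h : ∀ s, f₁ s ≤ f₂ s) :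
    eintegral ν f₁ ≤ eintegral ν f₂ :=
  EReal.sub_le_sub
    (EReal.coe_ennreal_le_coe_ennreal_iff.2 (lintegral_mono fun s => eposPart_mono (h s)))
    (EReal.coe_ennreal_le_coe_ennreal_iff.2
      (lintegral_mono fun s => eposPart_mono (EReal.neg_le_neg_iff.2 (h s))))

lemma eintegral_decomp (ν : Measure S)
    (f : S → EReal) (hf : Measurable f) (g : S → ℝ) (hg : Measurable g)
    (hfg : ∀ s, (g s : EReal) ≤ f s)
    (hgp : (∫⁻ s, ENNReal.ofReal (g s) ∂ν) ≠ ⊤)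
    (hgn : (∫⁻ s, ENNReal.ofReal (-g s) ∂ν) ≠ ⊤) :
    eintegral ν f
      = ((∫⁻ s, eposPart (f s - (g s : EReal)) ∂ν : ℝ≥0∞) : EReal)
        + eintegral ν (fun s => (g s : EReal)) := by
  have hP : Measurable (fun s => eposPart (f s)) := measurable_eposPart.comp hf
  have hNm : Measurable (fun s => eposPart (-f s)) := measurable_eposPart.comp hf.neg
  have hAm : Measurable (fun s => eposPart (f s - (g s : EReal))) := by
    have : (fun s => eposPart (f s - (g s : EReal)))
        = fun s => if f s = ⊤ then ⊤ else ENNReal.ofReal ((f s).toReal - g s) := by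
      funext s; exact eposPart_sub_coe_eq (f s) (g s) (hfg s)
    rw [this]
    exact Measurable.ite (hf (measurableSet_singleton ⊤)) measurable_const
      (((hf.ereal_toReal).sub hg).ennreal_ofReal)
  set P := ∫⁻ s, eposPart (f s) ∂ν with hPdef
  set N := ∫⁻ s, eposPart (-f s) ∂ν with hNdef
  set A := ∫⁻ s, eposPart (f s - (g s : EReal)) ∂ν with hAdef
  set Gp := ∫⁻ s, ENNReal.ofReal (g s) ∂ν with hGpdef
  set Gn := ∫⁻ s, ENNReal.ofReal (-g s) ∂ν with hGndef
  have hNle : N ≤ Gn := by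
    apply lintegral_mono
    intro s
    have : -f s ≤ ((-g s : ℝ) : EReal) := by
      rw [EReal.coe_neg]; exact EReal.neg_le_neg_iff.2 (hfg s)
    calc eposPart (-f s) ≤ eposPart ((-g s : ℝ) : EReal) := eposPart_mono this
      _ = ENNReal.ofReal (-g s) := eposPart_coe _
  have hNt : N ≠ ⊤ := fun h => hgn (top_le_iff.1 (h ▸ hNle))
  have e1 : ∫⁻ s, (eposPart (f s) + ENNReal.ofReal (-g s)) ∂ν = P + Gn :=
    lintegral_add_left hP _
  have e2 : ∫⁻ s, (eposPart (f s - (g s : EReal)) + ENNReal.ofReal (g s) + eposPart (-f s)) ∂ν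
      = A + Gp + N := by
    rw [lintegral_add_right _ hNm, lintegral_add_right _ hg.ennreal_ofReal]
  have hEq : P + Gn = A + Gp + N := by
    rw [← e1, ← e2]
    exact lintegral_congr fun s => eposPart_identity (f s) (g s) (hfg s)
  have hgint : eintegral ν (fun s => ((g s : ℝ) : EReal)) = (Gp : EReal) - (Gn : EReal) :=
    eintegral_coe_real ν g
  rw [hgint]
  show (P : EReal) - (N : EReal) = (A : EReal) + ((Gp : EReal) - (Gn : EReal))
  rcases eq_or_ne A ⊤ with hA | hA
  · have hPt : P = ⊤ := by
      have h1 : P + Gn = ⊤ := by rw [hEq, hA, top_add, top_add]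
      rcases ENNReal.add_eq_top.1 h1 with h2 | h2
      · exact h2
      · exact absurd h2 hgn
    rw [hPt, hA, coe_ennreal_eq_coe_toReal hNt, EReal.coe_ennreal_top, EReal.top_sub_coe,
      coe_ennreal_eq_coe_toReal hgp, coe_ennreal_eq_coe_toReal hgn, ← EReal.coe_sub,
      EReal.top_add_coe]
  · have hPt : P ≠ ⊤ := by
      intro hP'
      have h1 : A + Gp + N = ⊤ := by rw [← hEq, hP', top_add]
      rcases ENNReal.add_eq_top.1 h1 with h2 | h2
      · rcases ENNReal.add_eq_top.1 h2 with h3 | h3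
        · exact hA h3
        · exact hgp h3
      · exact hNt h2
    have hreal : P.toReal + Gn.toReal = A.toReal + Gp.toReal + N.toReal := by
      have := congrArg ENNReal.toReal hEq
      rwa [ENNReal.toReal_add hPt hgn, ENNReal.toReal_add (ENNReal.add_ne_top.2 ⟨hA, hgp⟩) hNt,
        ENNReal.toReal_add hA hgp] at this
    rw [coe_ennreal_eq_coe_toReal hPt, coe_ennreal_eq_coe_toReal hNt,
      coe_ennreal_eq_coe_toReal hA, coe_ennreal_eq_coe_toReal hgp,
      coe_ennreal_eq_coe_toReal hgn, ← EReal.coe_sub, ← EReal.coe_sub, ← EReal.coe_add,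
      EReal.coe_eq_coe_iff]
    linarith

end EIntegral

section LiminfHelpers

lemma liminf_coe_ennreal_ereal {ι : Type*} {F : Filter ι} [F.NeBot] (a : ι → ℝ≥0∞) :
    liminf (fun i => ((a i : ℝ≥0∞) : EReal)) F = ((liminf a F : ℝ≥0∞) : EReal) :=
  (Monotone.map_liminf_of_continuousAt (F := F)
    (fun _ _ h => EReal.coe_ennreal_le_coe_ennreal_iff.2 h) a
    (continuous_coe_ennreal_ereal.continuousAt)).symm

variable {S : Type*} [TopologicalSpace S]

lemma limsup_g_le (g : S → ℝ) (s : S) (hgusc : UpperSemicontinuous g) :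
    limsup (fun p : ℕ × S => ((g p.2 : ℝ) : EReal)) (atTop ×ˢ 𝓝 s) ≤ (g s : EReal) := by
  by_contra hlt
  push_neg at hlt
  obtain ⟨y, hy1, hy2⟩ := EReal.exists_between_coe_real hlt
  have hfreq : ∃ᶠ p : ℕ × S in atTop ×ˢ 𝓝 s, (y : EReal) < (g p.2 : EReal) :=
    frequently_lt_of_lt_limsup (by isBoundedDefault) hy2
  have hev : ∀ᶠ p : ℕ × S in atTop ×ˢ 𝓝 s, (g p.2 : EReal) < (y : EReal) := by
    have h1 : ∀ᶠ s' in 𝓝 s, (g s' : EReal) < (y : EReal) :=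
      (hgusc s y (by exact_mod_cast hy1)).mono fun s' h => EReal.coe_lt_coe_iff.2 h
    exact h1.prod_inr atTop
  exact (hfreq.and_eventually hev).exists.elim fun p hp => absurd (hp.1.trans hp.2) (lt_irrefl _)

lemma le_limsup_g (g : S → ℝ) (s : S) :
    (g s : EReal) ≤ limsup (fun p : ℕ × S => ((g p.2 : ℝ) : EReal)) (atTop ×ˢ 𝓝 s) := by
  apply le_limsup_of_frequently_le _ (by isBoundedDefault)
  rw [Filter.Frequently]
  intro hev
  obtain ⟨A, hA, U, hU, hsub⟩ := Filter.mem_prod_iff.1 hev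
  obtain ⟨n, hn⟩ := Filter.nonempty_of_mem hA
  have : (n, s) ∈ A ×ˢ U := ⟨hn, mem_of_mem_nhds hU⟩
  exact (hsub this) (le_refl _)

lemma limsup_g_ne_top (g : S → ℝ) (s : S) (K : ℝ) (hK : ∀ s', g s' ≤ K) :
    limsup (fun p : ℕ × S => ((g p.2 : ℝ) : EReal)) (atTop ×ˢ 𝓝 s) ≠ ⊤ := by
  have : limsup (fun p : ℕ × S => ((g p.2 : ℝ) : EReal)) (atTop ×ˢ 𝓝 s) ≤ (K : EReal) :=
    limsup_le_of_le (by isBoundedDefault)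
      (Eventually.of_forall fun p => by exact_mod_cast hK p.2)
  exact fun h => absurd (h ▸ this) (by simp)

end LiminfHelpers

section Lipschitz

variable {S : Type*} [MetricSpace S] [Nonempty S]

/-- Truncation of `H m` at level `k`, as a real-valued function. -/
noncomputable def vv (H : ℕ → S → ℝ≥0∞) (k m : ℕ) (s : S) : ℝ := (min (H m s) k).toReal

/-- The `k`-Lipschitz lower approximation of the tail of the sequence `H`. -/
noncomputable def uu (H : ℕ → S → ℝ≥0∞) (k : ℕ) (s : S) : ℝ :=
  ⨅ q : {m : ℕ // k ≤ m} × S, (vv H k q.1 q.2 + k * dist s q.2)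

variable (H : ℕ → S → ℝ≥0∞)

omit [MetricSpace S] [Nonempty S] in
lemma vv_nonneg (k m : ℕ) (s : S) : 0 ≤ vv H k m s := ENNReal.toReal_nonneg

omit [MetricSpace S] [Nonempty S] in
lemma vv_le (k m : ℕ) (s : S) : vv H k m s ≤ k := by
  have : (min (H m s) k).toReal ≤ ((k : ℝ≥0∞)).toReal :=
    ENNReal.toReal_mono (by simp) (min_le_right _ _)
  simpa [vv] using this

lemma uu_bdd (k : ℕ) (s : S) :
    BddBelow (Set.range fun q : {m : ℕ // k ≤ m} × S => vv H k q.1 q.2 + k * dist s q.2) := by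
  refine ⟨0, fun x hx => ?_⟩
  obtain ⟨q, rfl⟩ := hx
  have := vv_nonneg H k q.1 q.2
  positivity

lemma uu_le (k : ℕ) (s : S) {m : ℕ} (hm : k ≤ m) (s' : S) :
    uu H k s ≤ vv H k m s' + k * dist s s' :=
  ciInf_le (uu_bdd H k s) (⟨⟨m, hm⟩, s'⟩ : {m : ℕ // k ≤ m} × S)

lemma uu_nonneg (k : ℕ) (s : S) : 0 ≤ uu H k s := by
  apply le_ciInf
  intro q
  have := vv_nonneg H k q.1 q.2
  positivity

lemma uu_le_k (k : ℕ) (s : S) : uu H k s ≤ k := by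
  have := uu_le H k s (le_refl k) s
  simp only [dist_self, mul_zero, add_zero] at this
  exact this.trans (vv_le H k k s)

lemma uu_lip (k : ℕ) (s t : S) : uu H k s ≤ uu H k t + k * dist s t := by
  apply _root_.le_of_forall_pos_le_add
  intro ε hε
  have h1 : uu H k t < uu H k t + ε := by linarith
  obtain ⟨q, hq⟩ := exists_lt_of_ciInf_lt (h1 : uu H k t < _)
  have h2 : uu H k s ≤ vv H k q.1 q.2 + k * dist s q.2 := uu_le H k s q.1.2 q.2
  have h3 : dist s q.2 ≤ dist s t + dist t q.2 := dist_triangle s t q.2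
  have hk0 : (0:ℝ) ≤ k := Nat.cast_nonneg k
  nlinarith [hq, h2, h3]

lemma uu_cont (k : ℕ) : Continuous (uu H k) := by
  have : LipschitzWith (k : NNReal) (uu H k) := by
    apply LipschitzWith.of_dist_le_mul
    intro s t
    rw [Real.dist_eq, abs_le]
    have h1 := uu_lip H k s t
    have h2 := uu_lip H k t s
    rw [dist_comm t s] at h2
    constructor <;> simp only [NNReal.coe_natCast] <;> linarith
  exact this.continuous

lemma uu_mono (s : S) : Monotone (fun k => uu H k s) := by
  intro k l hkl
  apply le_ciInf
  rintro ⟨⟨m, hm⟩, s'⟩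
  have h1 : uu H k s ≤ vv H k m s' + k * dist s s' := uu_le H k s (hkl.trans hm) s'
  have h2 : vv H k m s' ≤ vv H l m s' :=
    ENNReal.toReal_mono (by simp) (min_le_min (le_refl _) (by exact_mod_cast hkl))
  have h3 : (k:ℝ) * dist s s' ≤ (l:ℝ) * dist s s' :=
    mul_le_mul_of_nonneg_right (by exact_mod_cast hkl) dist_nonneg
  dsimp only
  linarith

lemma ofReal_uu_le_H (k : ℕ) (s : S) {n : ℕ} (hn : k ≤ n) :
    ENNReal.ofReal (uu H k s) ≤ H n s := by
  have h1 : uu H k s ≤ vv H k n s := by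
    have := uu_le H k s hn s
    simpa using this
  calc ENNReal.ofReal (uu H k s) ≤ ENNReal.ofReal (vv H k n s) := ENNReal.ofReal_le_ofReal h1
    _ = min (H n s) k := ENNReal.ofReal_toReal (by simp)
    _ ≤ H n s := min_le_left _ _

lemma ofReal_uu_le_liminf (k : ℕ) (s : S) :
    ENNReal.ofReal (uu H k s) ≤ liminf (fun p : ℕ × S => H p.1 p.2) (atTop ×ˢ 𝓝 s) := by
  set Ψ := liminf (fun p : ℕ × S => H p.1 p.2) (atTop ×ˢ 𝓝 s) with hΨ
  apply ENNReal.le_of_forall_pos_le_add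
  intro ε hε hΨtop
  set δ : ℝ := (ε : ℝ) / (2 * (k + 1)) with hδdef
  have hδ : 0 < δ := by positivity
  set U := Metric.ball s δ with hU
  set a : ℝ≥0∞ := ⨅ q : {m : ℕ // k ≤ m} × U, H q.1 q.2 with ha
  have haΨ : a ≤ Ψ := by
    apply le_liminf_of_le (by isBoundedDefault)
    have hmem : {p : ℕ × S | k ≤ p.1 ∧ p.2 ∈ U} ∈ atTop ×ˢ 𝓝 s :=
      Filter.prod_mem_prod (eventually_ge_atTop k) (Metric.ball_mem_nhds s hδ)
    exact Filter.mem_of_superset hmem fun p hp =>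
      iInf_le (fun q : {m : ℕ // k ≤ m} × U => H q.1 q.2) (⟨⟨p.1, hp.1⟩, ⟨p.2, hp.2⟩⟩)
  have hatop : a ≠ ⊤ := fun h => absurd (h ▸ haΨ) (not_le.2 hΨtop)
  have h2 : a < a + (ε : ℝ≥0∞) / 2 := ENNReal.lt_add_right hatop (by simp [hε.ne'])
  obtain ⟨⟨⟨m, hm⟩, ⟨s', hs'⟩⟩, hq⟩ := iInf_lt_iff.1 h2
  have h3 : uu H k s ≤ vv H k m s' + k * δ := by
    have := uu_le H k s hm s'
    have hd : dist s s' ≤ δ := by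
      rw [dist_comm]; exact le_of_lt (Metric.mem_ball.1 hs')
    nlinarith [Nat.cast_nonneg (α := ℝ) k]
  have h4 : ENNReal.ofReal ((k:ℝ) * δ) ≤ (ε : ℝ≥0∞) / 2 := by
    have h5 : (k:ℝ) / (2*(k+1)) ≤ 1/2 := by
      rw [div_le_div_iff₀ (by positivity) (by norm_num)]
      linarith
    have hkd : (k : ℝ) * δ ≤ (ε : ℝ) / 2 := by
      rw [hδdef]
      calc (k:ℝ) * ((ε:ℝ)/(2*(k+1))) = (ε:ℝ) * ((k:ℝ)/(2*(k+1))) := by ring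
        _ ≤ (ε:ℝ) * (1/2) := mul_le_mul_of_nonneg_left h5 ε.coe_nonneg
        _ = (ε:ℝ)/2 := by ring
    calc ENNReal.ofReal ((k:ℝ)*δ) ≤ ENNReal.ofReal ((ε:ℝ)/2) := ENNReal.ofReal_le_ofReal hkd
      _ = (ε : ℝ≥0∞)/2 := by
        rw [ENNReal.ofReal_div_of_pos (by norm_num), ENNReal.ofReal_coe_nnreal]
        norm_num
  have hq' : H m s' < a + (ε:ℝ≥0∞)/2 := hq
  calc ENNReal.ofReal (uu H k s)
      ≤ ENNReal.ofReal (vv H k m s' + k * δ) := ENNReal.ofReal_le_ofReal h3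
    _ ≤ ENNReal.ofReal (vv H k m s') + ENNReal.ofReal ((k:ℝ) * δ) := ENNReal.ofReal_add_le
    _ ≤ min (H m s') k + (ε:ℝ≥0∞)/2 :=
        add_le_add (le_of_eq (ENNReal.ofReal_toReal (by simp))) h4
    _ ≤ H m s' + (ε:ℝ≥0∞)/2 := add_le_add_left (min_le_left _ _) _
    _ ≤ (a + (ε:ℝ≥0∞)/2) + (ε:ℝ≥0∞)/2 := add_le_add_left hq'.le _
    _ = a + (ε:ℝ≥0∞) := by rw [add_assoc, ENNReal.add_halves]
    _ ≤ Ψ + ε := add_le_add_left haΨ _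

lemma liminf_le_iSup_uu (s : S) :
    liminf (fun p : ℕ × S => H p.1 p.2) (atTop ×ˢ 𝓝 s) ≤ ⨆ k, ENNReal.ofReal (uu H k s) := by
  apply ENNReal.le_of_forall_nnreal_lt
  intro c hc
  have hev : ∀ᶠ p : ℕ × S in atTop ×ˢ 𝓝 s, (c : ℝ≥0∞) < H p.1 p.2 :=
    eventually_lt_of_lt_liminf hc
  obtain ⟨A, hA, U, hU, hsub⟩ := Filter.mem_prod_iff.1 hev
  obtain ⟨n₀, hn₀⟩ := Filter.mem_atTop_sets.1 hA
  obtain ⟨ε, hε, hball⟩ := Metric.mem_nhds_iff.1 hU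
  obtain ⟨k, hk⟩ := exists_nat_ge (max (max (n₀ : ℝ) ((c : ℝ))) ((c : ℝ) / ε))
  have hkn₀ : n₀ ≤ k := by
    have : (n₀ : ℝ) ≤ k := le_trans (le_max_left _ _) (le_trans (le_max_left _ _) hk)
    exact_mod_cast this
  have hkc : (c : ℝ) ≤ k := le_trans (le_max_right _ _) (le_trans (le_max_left _ _) hk)
  have hkε : (c : ℝ) ≤ k * ε := by
    have h1 : (c : ℝ) / ε ≤ k := le_trans (le_max_right _ _) hk
    calc (c:ℝ) = ((c:ℝ)/ε) * ε := by field_simp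
      _ ≤ k * ε := mul_le_mul_of_nonneg_right h1 hε.le
  have hcu : (c : ℝ) ≤ uu H k s := by
    apply le_ciInf
    rintro ⟨⟨m, hm⟩, s'⟩
    dsimp only
    rcases lt_or_ge (dist s' s) ε with hd | hd
    · have hmem : (m, s') ∈ A ×ˢ U := ⟨hn₀ m (hkn₀.trans hm), hball (Metric.mem_ball.2 hd)⟩
      have hH : (c : ℝ≥0∞) < H m s' := hsub hmem
      have hvv : (c : ℝ) ≤ vv H k m s' := by
        have h1 : (c : ℝ≥0∞) ≤ min (H m s') k :=
          le_min hH.le (by exact_mod_cast ENNReal.coe_le_coe.2 (show c ≤ (k : NNReal) by exact_mod_cast hkc))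
        have h2 := ENNReal.toReal_mono (by simp) h1
        simpa [vv] using h2
      have hmn : (0:ℝ) ≤ (k:ℝ) * dist s s' :=
        mul_nonneg (Nat.cast_nonneg k) dist_nonneg
      linarith
    · have h1 : (c : ℝ) ≤ k * dist s s' := by
        rw [dist_comm]
        calc (c : ℝ) ≤ k * ε := hkε
          _ ≤ k * dist s' s := mul_le_mul_of_nonneg_left hd (Nat.cast_nonneg k)
      linarith [vv_nonneg H k m s']
  calc (c : ℝ≥0∞) = ENNReal.ofReal (c : ℝ) := (ENNReal.ofReal_coe_nnreal).symm
    _ ≤ ENNReal.ofReal (uu H k s) := ENNReal.ofReal_le_ofReal hcu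
    _ ≤ ⨆ k, ENNReal.ofReal (uu H k s) := le_iSup (fun k => ENNReal.ofReal (uu H k s)) k

end Lipschitz

section WeakConv

lemma lintegral_cont_bounded_tendsto {S : Type*} [MetricSpace S] [MeasurableSpace S] [BorelSpace S]
    (μs : ℕ → Measure S) (μ : Measure S)
    [∀ n, IsProbabilityMeasure (μs n)] [IsProbabilityMeasure μ]
    (hweak : ∀ h : S → ℝ, Continuous h → (∃ C : ℝ, ∀ s, |h s| ≤ C) →
      Tendsto (fun n => ∫ s, h s ∂(μs n)) atTop (𝓝 (∫ s, h s ∂μ)))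
    (u : S → ℝ) (hc : Continuous u) (h0 : ∀ s, 0 ≤ u s) (C : ℝ) (hC : ∀ s, u s ≤ C) :
    Tendsto (fun n => ∫⁻ s, ENNReal.ofReal (u s) ∂(μs n)) atTop
      (𝓝 (∫⁻ s, ENNReal.ofReal (u s) ∂μ)) := by
  have hbd : ∃ C : ℝ, ∀ s, |u s| ≤ C :=
    ⟨C, fun s => abs_le.2 ⟨by linarith [h0 s, hC s], hC s⟩⟩
  have hint : ∀ ν : Measure S, IsProbabilityMeasure ν → Integrable u ν := fun ν hν =>
    ⟨hc.aestronglyMeasurable, HasFiniteIntegral.of_bounded (C := C)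
      (ae_of_all _ fun s => abs_le.2 ⟨by linarith [h0 s, hC s], hC s⟩)⟩
  have heq : ∀ ν : Measure S, IsProbabilityMeasure ν →
      ∫⁻ s, ENNReal.ofReal (u s) ∂ν = ENNReal.ofReal (∫ s, u s ∂ν) := fun ν hν =>
    (ofReal_integral_eq_lintegral_ofReal (hint ν hν) (ae_of_all _ h0)).symm
  have h1 := (ENNReal.continuous_ofReal.tendsto _).comp (hweak u hc hbd)
  rw [← heq μ inferInstance] at h1
  convert h1 using 2 with n
  exact heq (μs n) inferInstance

end WeakConv

/-- Fatou's lemma for weakly converging probability measures with a single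
bounded-above upper semicontinuous minorant `g` satisfying
`−∞ < ∫ g dμ = lim_n ∫ g dμ_n`. -/
theorem fatou_weak_convergence_usc_minorant
    {S : Type*} [MetricSpace S] [MeasurableSpace S] [BorelSpace S]
    (μs : ℕ → Measure S) (μ : Measure S)
    [∀ n, IsProbabilityMeasure (μs n)] [IsProbabilityMeasure μ]
    (hweak : ∀ h : S → ℝ, Continuous h → (∃ C : ℝ, ∀ s, |h s| ≤ C) →
      Tendsto (fun n => ∫ s, h s ∂(μs n)) atTop (𝓝 (∫ s, h s ∂μ)))
    (f : ℕ → S → EReal) (hf : ∀ n, Measurable (f n))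
    (g : S → ℝ) (hgusc : UpperSemicontinuous g) (K : ℝ) (hK : ∀ s, g s ≤ K)
    (hfg : ∀ n s, (g s : EReal) ≤ f n s)
    (hdf : ∀ n, EIntegralDefined (μs n) (f n))
    (hdliminf : EIntegralDefined μ
      (fun s => liminf (fun p : ℕ × S => f p.1 p.2) (atTop ×ˢ 𝓝 s)))
    (hbound : ⊥ < eintegral μ (fun s => (g s : EReal)))
    (hlim : Tendsto (fun n => eintegral (μs n) (fun s => (g s : EReal))) atTop
      (𝓝 (eintegral μ (fun s => (g s : EReal))))) :
    eintegral μ (fun s => liminf (fun p : ℕ × S => f p.1 p.2) (atTop ×ˢ 𝓝 s)) ≤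
      liminf (fun n => eintegral (μs n) (f n)) atTop := by
  classical
  -- S is nonempty
  have hSne : Nonempty S := by
    by_contra h
    rw [not_nonempty_iff] at h
    have h1 : μ Set.univ = 1 := measure_univ
    rw [Set.univ_eq_empty_iff.mpr h, measure_empty] at h1
    exact zero_ne_one h1
  have hg : Measurable g := hgusc.measurable
  -- the nonnegative parts
  set H : ℕ → S → ℝ≥0∞ := fun n s => eposPart (f n s - (g s : EReal)) with hHdef
  have hrecon : ∀ n s, f n s = (g s : EReal) + ((H n s : ℝ≥0∞) : EReal) := fun n s =>
    recon_eq (f n s) (g s) (hfg n s)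
  -- finiteness of ∫ g⁺ for any probability measure
  have hgp_fin : ∀ ν : Measure S, IsProbabilityMeasure ν →
      (∫⁻ s, ENNReal.ofReal (g s) ∂ν) ≠ ⊤ := by
    intro ν hν
    have h1 : (∫⁻ s, ENNReal.ofReal (g s) ∂ν) ≤ ENNReal.ofReal K := by
      calc ∫⁻ s, ENNReal.ofReal (g s) ∂ν ≤ ∫⁻ _, ENNReal.ofReal K ∂ν :=
            lintegral_mono fun s => ENNReal.ofReal_le_ofReal (hK s)
        _ = ENNReal.ofReal K := by rw [lintegral_const, measure_univ, mul_one]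
    exact (lt_of_le_of_lt h1 ENNReal.ofReal_lt_top).ne
  -- finiteness of ∫ g⁻ whenever the g-integral is not ⊥
  have hgn_fin : ∀ ν : Measure S, eintegral ν (fun s => (g s : EReal)) ≠ ⊥ →
      (∫⁻ s, ENNReal.ofReal (-g s) ∂ν) ≠ ⊤ := by
    intro ν hne h
    apply hne
    rw [eintegral_coe_real, h, EReal.coe_ennreal_top, EReal.sub_top]
  -- eventually the g-integrals are not ⊥
  have hGn_ev : ∀ᶠ n in atTop, eintegral (μs n) (fun s => (g s : EReal)) ≠ ⊥ :=
    (hlim.eventually_const_lt hbound).mono fun n h => h.ne'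
  -- decomposition for μs n
  have hdecompn : ∀ᶠ n in atTop, eintegral (μs n) (f n)
      = ((∫⁻ s, H n s ∂(μs n) : ℝ≥0∞) : EReal)
        + eintegral (μs n) (fun s => (g s : EReal)) := by
    refine hGn_ev.mono fun n hn => ?_
    exact eintegral_decomp (μs n) (f n) (hf n) g hg (hfg n)
      (hgp_fin (μs n) inferInstance) (hgn_fin (μs n) hn)
  -- RHS chain
  set AA : ℕ → ℝ≥0∞ := fun n => ∫⁻ s, H n s ∂(μs n) with hAAdef
  have hRHS : ((liminf AA atTop : ℝ≥0∞) : EReal) + eintegral μ (fun s => (g s : EReal))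
      ≤ liminf (fun n => eintegral (μs n) (f n)) atTop := by
    rw [← liminf_coe_ennreal_ereal, ← hlim.liminf_eq]
    refine le_trans EReal.le_liminf_add (le_of_eq (liminf_congr ?_))
    exact hdecompn.mono fun n h => h.symm
  -- the limit function Ψ
  set Ψ : S → ℝ≥0∞ := fun s => ⨆ k, ENNReal.ofReal (uu H k s) with hΨdef
  have hΨlim : ∀ s, liminf (fun p : ℕ × S => H p.1 p.2) (atTop ×ˢ 𝓝 s) = Ψ s := fun s =>
    le_antisymm (liminf_le_iSup_uu H s) (iSup_le fun k => ofReal_uu_le_liminf H k s)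
  have hΨm : Measurable Ψ :=
    Measurable.iSup fun k => ((uu_cont H k).measurable).ennreal_ofReal
  -- pointwise bound on liminf
  have hpt : ∀ s, liminf (fun p : ℕ × S => f p.1 p.2) (atTop ×ˢ 𝓝 s)
      ≤ ((Ψ s : ℝ≥0∞) : EReal) + (g s : EReal) := by
    intro s
    have h1 : (fun p : ℕ × S => f p.1 p.2)
        = (fun p : ℕ × S => ((g p.2 : ℝ) : EReal))
          + (fun p : ℕ × S => ((H p.1 p.2 : ℝ≥0∞) : EReal)) := by
      funext p; exact hrecon p.1 p.2
    rw [h1]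
    have hub : (g s : EReal)
        ≤ limsup (fun p : ℕ × S => ((g p.2 : ℝ) : EReal)) (atTop ×ˢ 𝓝 s) := le_limsup_g g s
    have hcond1 : limsup (fun p : ℕ × S => ((g p.2 : ℝ) : EReal)) (atTop ×ˢ 𝓝 s) ≠ ⊥ ∨
        liminf (fun p : ℕ × S => ((H p.1 p.2 : ℝ≥0∞) : EReal)) (atTop ×ˢ 𝓝 s) ≠ ⊤ :=
      Or.inl fun h => absurd (h ▸ hub) (by simp)
    have hcond2 : limsup (fun p : ℕ × S => ((g p.2 : ℝ) : EReal)) (atTop ×ˢ 𝓝 s) ≠ ⊤ ∨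
        liminf (fun p : ℕ × S => ((H p.1 p.2 : ℝ≥0∞) : EReal)) (atTop ×ˢ 𝓝 s) ≠ ⊥ :=
      Or.inl (limsup_g_ne_top g s K hK)
    refine le_trans (EReal.liminf_add_le hcond1 hcond2) ?_
    rw [liminf_coe_ennreal_ereal, hΨlim s, add_comm]
    exact add_le_add_right (limsup_g_le g s hgusc) _
  -- decomposition for μ with the function Ψ + g
  have hgnμ : (∫⁻ s, ENNReal.ofReal (-g s) ∂μ) ≠ ⊤ := hgn_fin μ hbound.ne'
  have hΨgm : Measurable (fun s => ((Ψ s : ℝ≥0∞) : EReal) + (g s : EReal)) := by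
    have heq : (fun s => ((Ψ s : ℝ≥0∞) : EReal) + (g s : EReal))
        = fun s => if Ψ s = ⊤ then (⊤ : EReal) else (((Ψ s).toReal + g s : ℝ) : EReal) := by
      funext s
      rcases eq_or_ne (Ψ s) ⊤ with h | h
      · rw [if_pos h, h, EReal.coe_ennreal_top, EReal.top_add_coe]
      · rw [if_neg h, coe_ennreal_eq_coe_toReal h, ← EReal.coe_add]
    rw [heq]
    exact Measurable.ite (hΨm (measurableSet_singleton ⊤)) measurable_const
      ((hΨm.ennreal_toReal.add hg).coe_real_ereal)
  have hdecompμ : eintegral μ (fun s => ((Ψ s : ℝ≥0∞) : EReal) + (g s : EReal))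
      = ((∫⁻ s, Ψ s ∂μ : ℝ≥0∞) : EReal) + eintegral μ (fun s => (g s : EReal)) := by
    have h1 := eintegral_decomp μ (fun s => ((Ψ s : ℝ≥0∞) : EReal) + (g s : EReal)) hΨgm g hg
      (fun s => le_add_of_nonneg_left (EReal.coe_ennreal_nonneg (Ψ s)))
      (hgp_fin μ inferInstance) hgnμ
    rw [h1]
    congr 2
    refine lintegral_congr fun s => ?_
    rw [EReal.add_sub_cancel_right, eposPart_coe_ennreal]
  -- the core Fatou inequality
  have hcore : (∫⁻ s, Ψ s ∂μ) ≤ liminf AA atTop := by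
    have hmono : Monotone (fun k => fun s => ENNReal.ofReal (uu H k s)) := by
      intro k l hkl s
      exact ENNReal.ofReal_le_ofReal (uu_mono H s hkl)
    calc (∫⁻ s, Ψ s ∂μ) = ⨆ k, ∫⁻ s, ENNReal.ofReal (uu H k s) ∂μ :=
          lintegral_iSup (fun k => ((uu_cont H k).measurable).ennreal_ofReal) hmono
      _ ≤ liminf AA atTop := by
          apply iSup_le
          intro k
          have htend := lintegral_cont_bounded_tendsto μs μ hweak (uu H k) (uu_cont H k)
            (uu_nonneg H k) k (uu_le_k H k)
          rw [← htend.liminf_eq]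
          exact liminf_le_liminf (by
            filter_upwards [eventually_ge_atTop k] with n hn
            exact lintegral_mono fun s => ofReal_uu_le_H H k s hn)
  -- put everything together
  calc eintegral μ (fun s => liminf (fun p : ℕ × S => f p.1 p.2) (atTop ×ˢ 𝓝 s))
      ≤ eintegral μ (fun s => ((Ψ s : ℝ≥0∞) : EReal) + (g s : EReal)) :=
        eintegral_mono μ _ _ hpt
    _ = ((∫⁻ s, Ψ s ∂μ : ℝ≥0∞) : EReal) + eintegral μ (fun s => (g s : EReal)) := hdecompμ
    _ ≤ ((liminf AA atTop : ℝ≥0∞) : EReal) + eintegral μ (fun s => (g s : EReal)) :=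
        add_le_add_left (EReal.coe_ennreal_le_coe_ennreal_iff.2 hcore) _
    _ ≤ liminf (fun n => eintegral (μs n) (f n)) atTop := hRHS
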